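/- Suppose d = a₁ and F + 1 = d·(F + 1 − g). Then ε_j = 0 for every j with 2 ≤ j ≤ a₁ − 1, n_Q = 1, R = a₁, and a_i = (Q + 1)·a₁ + (i − 1) for every i = 2, …, a₁. -/
import Mathlib

theorem strictMono_gap {d : ℕ} {a : Fin d → ℕ} (h : StrictMono a) :
    ∀ (m : ℕ) (i j : Fin d), (i : ℕ) + m = (j : ℕ) → a i + m ≤ a j := by
  intro m
  induction m with
  | zero =>
    intro i j hij
    have : i = j := Fin.ext (by omega)
    subst this; omega
  | succ k ih =>
    intro i j hij
    have hk : (i : ℕ) + k < d := by have := j.isLt; omega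
    have h1 : a i + k ≤ a ⟨(i : ℕ) + k, hk⟩ := ih i ⟨(i : ℕ) + k, hk⟩ rfl
    have h2 : a ⟨(i : ℕ) + k, hk⟩ < a j := h (by simp [Fin.lt_def]; omega)
    omega

theorem stmt10
    (d : ℕ) (hd : 2 ≤ d)
    (a : Fin d → ℕ)
    (ha_pos : ∀ i, 0 < a i)
    (ha_mono : StrictMono a)
    (ha_gcd : Finset.univ.gcd a = 1)
    (a1 : ℕ) (ha1 : a1 = a ⟨0, by omega⟩)
    (S : Set ℕ)
    (hS : S = {m : ℕ | ∃ c : Fin d → ℕ, m = ∑ i, c i * a i})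
    (hmin : ∀ j : Fin d, ¬ ∃ c : Fin d → ℕ, c j = 0 ∧ a j = ∑ i, c i * a i)
    (F : ℕ) (hF : F ∉ S) (hFmax : ∀ m : ℕ, F < m → m ∈ S)
    (g : ℕ) (hg : g = {m : ℕ | m ∉ S}.ncard)
    (Q R : ℕ) (hQR : F + 1 = Q * a1 + R) (hR2 : 2 ≤ R) (hRa : R ≤ a1)
    (I : ℕ → Set ℕ) (hI : ∀ k, I k = Set.Icc (k * a1) ((k + 1) * a1 - 1))
    (n : ℕ → ℕ) (hn : ∀ k, n k = (S ∩ Set.Icc 0 F ∩ I k).ncard)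
    (ε : ℕ → ℕ) (hε : ∀ j, ε j = {k : ℕ | k < Q ∧ (I k ∩ S).ncard = j}.ncard)
    (hda : d = a1)
    (heq : (F : ℤ) + 1 = (d : ℤ) * ((F : ℤ) + 1 - (g : ℤ)))
    :
    (∀ j : ℕ, 2 ≤ j → j ≤ a1 - 1 → ε j = 0) ∧ n Q = 1 ∧ R = a1 ∧
      (∀ i : Fin d, 0 < (i : ℕ) → a i = (Q + 1) * a1 + (i : ℕ)) := by
  have hd0 : 0 < d := by omega
  have ha12 : 2 ≤ a1 := hda ▸ hd
  have ha1pos : 0 < a1 := by omega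
  -- multiples of a1 are in S
  have hmulS : ∀ k : ℕ, k * a1 ∈ S := by
    intro k
    rw [hS]
    refine ⟨fun j => if j = ⟨0, hd0⟩ then k else 0, ?_⟩
    rw [Finset.sum_eq_single (⟨0, hd0⟩ : Fin d)]
    · simp [ha1]
    · intro b _ hb; simp [hb]
    · simp
  -- every positive element of S is ≥ a1
  have hgea1 : ∀ m ∈ S, m ≠ 0 → a1 ≤ m := by
    intro m hm hm0
    rw [hS] at hm
    obtain ⟨c, hc⟩ := hm
    have : ∃ j, c j ≠ 0 := by
      by_contra h
      push_neg at h
      simp only [h, zero_mul, Finset.sum_const_zero] at hc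
      exact hm0 hc
    obtain ⟨j, hj⟩ := this
    have h1 : c j * a j ≤ m := hc ▸ Finset.single_le_sum (f := fun i => c i * a i)
      (fun x _ => Nat.zero_le _) (Finset.mem_univ j)
    have h2 : a ⟨0, hd0⟩ ≤ a j := ha_mono.monotone (by simp [Fin.le_def])
    have h3 : a j ≤ c j * a j := Nat.le_mul_of_pos_left _ (Nat.pos_of_ne_zero hj)
    omega
  -- generators are in S
  have hgenS : ∀ i : Fin d, a i ∈ S := by
    intro i
    rw [hS]
    refine ⟨fun j => if j = i then 1 else 0, ?_⟩
    rw [Finset.sum_eq_single i]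
    · simp
    · intro b _ hb; simp [hb]
    · simp
  have hQF : Q * a1 + 1 ≤ F := by omega
  set T : Set ℕ := S ∩ Set.Icc 0 F with hT
  have hTfin : T.Finite := (Set.finite_Icc 0 F).subset (Set.inter_subset_right)
  have hGsub : {m : ℕ | m ∉ S} ⊆ Set.Icc 0 F := by
    intro m hm
    simp only [Set.mem_setOf_eq] at hm
    simp only [Set.mem_Icc]
    constructor
    · omega
    · by_contra h
      exact hm (hFmax m (by omega))
  have hGfin : {m : ℕ | m ∉ S}.Finite := (Set.finite_Icc 0 F).subset hGsub
  have hsplit : Set.Icc 0 F = T ∪ {m : ℕ | m ∉ S} := by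
    ext x
    simp only [Set.mem_Icc, Set.mem_union, hT, Set.mem_inter_iff, Set.mem_setOf_eq]
    constructor
    · intro hx
      by_cases hxS : x ∈ S
      · exact Or.inl ⟨hxS, hx⟩
      · exact Or.inr hxS
    · intro hx
      rcases hx with ⟨_, hx⟩ | hx
      · exact hx
      · exact ⟨by omega, by by_contra h; exact hx (hFmax x (by omega))⟩
  have hdisj : Disjoint T {m : ℕ | m ∉ S} := by
    rw [Set.disjoint_left]
    intro x hx hx2
    exact hx2 hx.1
  have hcount : T.ncard + g = F + 1 := by
    rw [hg, ← Set.ncard_union_eq hdisj hTfin hGfin, ← hsplit, ← Finset.coe_Icc,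
      Set.ncard_coe_finset, Nat.card_Icc]
    omega
  -- key equation over ℕ
  have hkey : F + 1 = a1 * T.ncard := by
    have h1 : ((F : ℤ) + 1 - g) = (T.ncard : ℤ) := by
      have := hcount
      push_cast
      omega
    rw [h1] at heq
    have : (F : ℤ) + 1 = (a1 : ℤ) * T.ncard := by rw [heq, hda]
    exact_mod_cast this
  have hRa1 : R = a1 := by
    have hdvd : a1 ∣ F + 1 := ⟨T.ncard, hkey⟩
    have hdvd2 : a1 ∣ R := by
      have h1 : a1 ∣ Q * a1 := Dvd.intro_left Q rfl
      have h2 := Nat.dvd_sub (hQR ▸ hdvd) h1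
      simpa using h2
    have := Nat.le_of_dvd (by omega) hdvd2
    omega
  have hTcard : T.ncard = Q + 1 := by
    have h1 : a1 * (Q + 1) = F + 1 := by rw [hQR, hRa1]; ring
    have h2 : a1 * (Q + 1) = a1 * T.ncard := by rw [h1, hkey]
    exact (Nat.eq_of_mul_eq_mul_left ha1pos h2).symm
  -- T equals the set of multiples of a1 up to Q
  set M : Set ℕ := (fun k => k * a1) '' Set.Iic Q with hMdef
  have hFval : F + 1 = (Q + 1) * a1 := by rw [hQR, hRa1]; ring
  have hMsub : M ⊆ T := by
    rintro x ⟨k, hk, rfl⟩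
    simp only [Set.mem_Iic] at hk
    refine ⟨hmulS k, by simp, ?_⟩
    show k * a1 ≤ F
    have e2 : (Q + 1) * a1 = Q * a1 + a1 := by ring
    have : k * a1 ≤ Q * a1 := Nat.mul_le_mul_right _ hk
    omega
  have hMcard : M.ncard = Q + 1 := by
    rw [hMdef, Set.ncard_image_of_injective _ (fun x y h => by
      exact Nat.eq_of_mul_eq_mul_right ha1pos h), ← Finset.coe_Iic, Set.ncard_coe_finset,
      Nat.card_Iic]
  have hTM : T = M :=
    (Set.eq_of_subset_of_ncard_le hMsub (by omega) hTfin).symm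
  -- structure of S below F
  have hstruct : ∀ m ∈ S, m ≤ F → ∃ k ≤ Q, m = k * a1 := by
    intro m hm hmF
    have : m ∈ M := hTM ▸ (⟨hm, by simp, hmF⟩ : m ∈ T)
    obtain ⟨k, hk, rfl⟩ := this
    exact ⟨k, hk, rfl⟩
  -- intervals below Q contain exactly k*a1
  have hIk : ∀ k ≤ Q, I k ∩ S = {k * a1} := by
    intro k hk
    rw [hI]
    have e1 : (k + 1) * a1 = k * a1 + a1 := by ring
    have e2 : (Q + 1) * a1 = Q * a1 + a1 := by ring
    have e3 : k * a1 ≤ Q * a1 := Nat.mul_le_mul_right _ hk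
    ext x
    simp only [Set.mem_inter_iff, Set.mem_Icc, Set.mem_singleton_iff]
    constructor
    · rintro ⟨⟨hx1, hx2⟩, hxS⟩
      have hxF : x ≤ F := by omega
      obtain ⟨k', hk', rfl⟩ := hstruct x hxS hxF
      have h1 : k ≤ k' := Nat.le_of_mul_le_mul_right (by omega) ha1pos
      have h2 : k' < k + 1 := lt_of_mul_lt_mul_right (by omega) (Nat.zero_le a1)
      have : k' = k := by omega
      rw [this]
    · rintro rfl
      exact ⟨⟨le_refl _, by omega⟩, hmulS k⟩
  refine ⟨?_, ?_, hRa1, ?_⟩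
  · -- epsilon
    intro j hj2 hj
    rw [hε]
    convert Set.ncard_empty ℕ
    ext k
    simp only [Set.mem_setOf_eq, Set.mem_empty_iff_false, iff_false, not_and]
    intro hkQ
    rw [hIk k (by omega), Set.ncard_singleton]
    omega
  · -- n Q = 1
    rw [hn]
    have e2 : (Q + 1) * a1 = Q * a1 + a1 := by ring
    have : S ∩ Set.Icc 0 F ∩ I Q = {Q * a1} := by
      ext x
      simp only [Set.mem_inter_iff, Set.mem_Icc, Set.mem_singleton_iff, hI]
      constructor
      · rintro ⟨⟨hxS, _, hxF⟩, hx1, hx2⟩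
        obtain ⟨k', hk', rfl⟩ := hstruct x hxS hxF
        have h1 : Q ≤ k' := Nat.le_of_mul_le_mul_right (by omega) ha1pos
        have h2 : k' ≤ Q := hk'
        have : k' = Q := by omega
        rw [this]
      · rintro rfl
        exact ⟨⟨hmulS Q, by omega, by omega⟩, le_refl _, by omega⟩
    rw [this, Set.ncard_singleton]
  · -- generators
    have hnotmul : ∀ i : Fin d, i ≠ ⟨0, hd0⟩ → ∀ k : ℕ, a i ≠ k * a1 := by
      intro i hi k hik
      apply hmin i
      refine ⟨fun j => if j = ⟨0, hd0⟩ then k else 0, by simp [hi], ?_⟩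
      rw [Finset.sum_eq_single (⟨0, hd0⟩ : Fin d)]
      · simp [ha1, hik]
      · intro b _ hb; simp [hb]
      · simp
    have hbound : ∀ i : Fin d, i ≠ ⟨0, hd0⟩ →
        (Q + 1) * a1 + 1 ≤ a i ∧ a i ≤ (Q + 1) * a1 + (a1 - 1) := by
      intro i hi
      have hgtF : F < a i := by
        by_contra h
        push_neg at h
        obtain ⟨k, _, hk⟩ := hstruct (a i) (hgenS i) h
        exact hnotmul i hi k hk
      have hub : a i ≤ F + a1 := by
        by_contra h
        push_neg at h
        have hmem : a i - a1 ∈ S := hFmax _ (by omega)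
        rw [hS] at hmem
        obtain ⟨c, hc⟩ := hmem
        have hci : c i = 0 := by
          by_contra hci
          have h1 : c i * a i ≤ a i - a1 :=
            hc ▸ Finset.single_le_sum (f := fun x => c x * a x)
              (fun x _ => Nat.zero_le _) (Finset.mem_univ i)
          have h2 : a i ≤ c i * a i := Nat.le_mul_of_pos_left _ (Nat.pos_of_ne_zero hci)
          omega
        apply hmin i
        refine ⟨fun j => if j = ⟨0, hd0⟩ then c j + 1 else c j, by simp [hi, hci], ?_⟩
        have hfun : (fun j => (if j = ⟨0, hd0⟩ then c j + 1 else c j) * a j)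
            = fun j => c j * a j + (if j = ⟨0, hd0⟩ then a j else 0) := by
          funext j
          by_cases hj : j = ⟨0, hd0⟩ <;> simp [hj] <;> ring
        have hsum : ∑ j, (if j = ⟨0, hd0⟩ then c j + 1 else c j) * a j
            = (∑ j, c j * a j) + a ⟨0, hd0⟩ := by
          rw [hfun, Finset.sum_add_distrib, Finset.sum_ite_eq' Finset.univ]
          simp
        rw [hsum, ← hc, ← ha1]
        have : a1 ≤ a i := by omega
        omega
      have hne : a i ≠ (Q + 1) * a1 := hnotmul i hi (Q + 1)
      omega
    intro i hi
    have hi' : i ≠ ⟨0, hd0⟩ := by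
      intro h
      rw [h] at hi
      simp at hi
    have h1d : 1 < d := hd
    have hib : (i : ℕ) < d := i.isLt
    have hlow : a ⟨1, h1d⟩ + ((i : ℕ) - 1) ≤ a i :=
      strictMono_gap ha_mono ((i : ℕ) - 1) ⟨1, h1d⟩ i (by simp; omega)
    have hdm : d - 1 < d := by omega
    have hhigh : a i + (d - 1 - (i : ℕ)) ≤ a ⟨d - 1, hdm⟩ :=
      strictMono_gap ha_mono (d - 1 - (i : ℕ)) i ⟨d - 1, hdm⟩ (by simp; omega)
    have hb1 := hbound ⟨1, h1d⟩ (by simp [Fin.ext_iff])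
    have hbd := hbound ⟨d - 1, hdm⟩ (by simp [Fin.ext_iff]; omega)
    have hbi := hbound i hi'
    omega
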